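/- arXiv:1907.13173 — 3 statements merged into one kernel-verified Lean document; each statement's English description precedes it below -/
import Mathlib

section
/- Let Φ : ℂ ∖ ((−∞, −1] ∪ [1, ∞)) → 𝔻 be the inverse of the holomorphic bijection S(z) = 2z/(z² + 1) from 𝔻 onto the doubly-slit plane. For r > 0 define H_r(z) = r·Φ(2z/r) for z ∈ ℍ (note 2z/r ∈ ℍ lies in the domain of Φ). Then H_r converges to the identity map locally uniformly on ℍ as r → ∞: for every compact set E ⊂ ℍ, sup_{z ∈ E} |H_r(z) − z| → 0 as r → ∞. -/
open Complex Metric Set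

/-- The map `S(z) = 2z/(z² + 1)`. -/
noncomputable def Smap (z : ℂ) : ℂ := 2 * z / (z ^ 2 + 1)

/-- The doubly-slit plane `ℂ ∖ ((−∞, −1] ∪ [1, ∞))`. -/
def doublySlit : Set ℂ :=
  Set.univ \ ((fun x : ℝ => (x : ℂ)) '' (Set.Iic (-1) ∪ Set.Ici 1))

theorem stmt10 (Φ : ℂ → ℂ)
    (hΦ1 : ∀ z ∈ ball (0:ℂ) 1, Φ (Smap z) = z)
    (hΦ2 : ∀ w ∈ doublySlit, Φ w ∈ ball (0:ℂ) 1 ∧ Smap (Φ w) = w) :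
    ∀ E : Set ℂ, IsCompact E → E ⊆ {z : ℂ | 0 < z.im} →
      TendstoUniformlyOn (fun (r : ℝ) (z : ℂ) => (r : ℂ) * Φ (2 * z / (r : ℂ)))
        id Filter.atTop E := by
  intro E hE hEim
  obtain ⟨M, hM⟩ := hE.isBounded.subset_closedBall 0
  rw [Metric.tendstoUniformlyOn_iff]
  intro ε hε
  -- choose R
  have key : ∀ r : ℝ, 1 ≤ r → ∀ z ∈ E, dist (id z) ((r:ℂ) * Φ (2 * z / (r:ℂ))) ≤ 4 * M^3 / r^2 := by
    intro r hr z hz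
    have hr0 : (0:ℝ) < r := lt_of_lt_of_le one_pos hr
    have hrC : (r:ℂ) ≠ 0 := by exact_mod_cast hr0.ne'
    have hzim : 0 < z.im := hEim hz
    have him : (2 * z / (r:ℂ)).im = 2 * z.im / r := by
      field_simp [Complex.div_im, Complex.mul_im, Complex.mul_re]
      rw [show 2 * z / (r:ℂ) = ((2 / r : ℝ) : ℂ) * z by push_cast; ring, Complex.im_ofReal_mul,
        div_mul_eq_mul_div, div_mul_cancel₀ _ hr0.ne']
    have himpos : 0 < (2 * z / (r:ℂ)).im := by
      rw [him]; positivity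
    have hmem : 2 * z / (r:ℂ) ∈ doublySlit := by
      constructor
      · trivial
      · rintro ⟨x, -, hx⟩
        rw [← hx] at himpos
        simp at himpos
    obtain ⟨hball, hS⟩ := hΦ2 _ hmem
    set w := Φ (2 * z / (r:ℂ)) with hw
    have hwlt : ‖w‖ < 1 := by simpa [mem_ball] using hball
    have hne : w ^ 2 + 1 ≠ 0 := by
      intro h
      rw [Smap, h, div_zero] at hS
      have : z = 0 := by
        field_simp at hS
        linear_combination -hS / 2
      rw [this] at hzim; simp at hzim
    have heq : (r:ℂ) * w = z * (w ^ 2 + 1) := by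
      rw [Smap] at hS
      field_simp at hS
      linear_combination hS
    have hdiff : (r:ℂ) * w - z = z * w ^ 2 := by
      linear_combination heq
    have hzM : ‖z‖ ≤ M := by
      have := hM hz; simpa [mem_closedBall] using this
    have hwb : r * ‖w‖ ≤ 2 * ‖z‖ := by
      have h1 : r * ‖w‖ = ‖z‖ * ‖w ^ 2 + 1‖ := by
        have := congrArg norm heq
        rw [norm_mul, norm_mul, Complex.norm_real, Real.norm_of_nonneg hr0.le] at this
        exact this
      have h2 : ‖w ^ 2 + 1‖ ≤ 2 := by
        calc ‖w ^ 2 + 1‖ ≤ ‖w ^ 2‖ + ‖(1:ℂ)‖ := norm_add_le (w^2) 1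
        _ ≤ 2 := by
          rw [norm_pow, norm_one]
          nlinarith [norm_nonneg w]
      nlinarith [norm_nonneg z]
    rw [dist_eq_norm]
    have : id z - (r:ℂ) * w = -(z * w ^ 2) := by simp only [id]; linear_combination - hdiff
    rw [this, norm_neg, norm_mul, norm_pow]
    have hb : ‖z‖ * ‖w‖ ^ 2 ≤ M * (2 * M / r) ^ 2 := by
      have h1 : ‖w‖ ≤ 2 * M / r := by
        rw [le_div_iff₀ hr0]
        nlinarith [norm_nonneg w]
      have : ‖w‖ ^ 2 ≤ (2 * M / r) ^ 2 :=
        pow_le_pow_left₀ (norm_nonneg w) h1 2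
      nlinarith [norm_nonneg z, norm_nonneg w, sq_nonneg (2*M/r)]
    calc ‖z‖ * ‖w‖ ^ 2 ≤ M * (2 * M / r) ^ 2 := hb
    _ = 4 * M ^ 3 / r ^ 2 := by field_simp; ring
  have hlim : Filter.Tendsto (fun r : ℝ => 4 * M ^ 3 / r ^ 2) Filter.atTop (nhds 0) := by
    apply Filter.Tendsto.div_atTop tendsto_const_nhds
    exact Filter.tendsto_pow_atTop (by norm_num) |>.comp Filter.tendsto_id
  have h1 : ∀ᶠ r : ℝ in Filter.atTop, 4 * M ^ 3 / r ^ 2 < ε :=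
    hlim.eventually_lt_const hε
  filter_upwards [h1, Filter.eventually_ge_atTop 1] with r h1 h2 z hz
  exact lt_of_le_of_lt (key r h2 z hz) h1
end

section
/- For p ∈ ℂ with |p| = 1 and t ∈ (−1, 1), the fold map F_{p,t} : 𝔻̄ → 𝔻̄, defined by F_{p,t}(z) = z for z ∈ C_{p,t} and F_{p,t}(z) = τ_{p,t}(z) for z ∈ C_{−p,−t}, is well defined (the two formulas agree on the overlap C_{p,t} ∩ C_{−p,−t}), takes values in the cap C_{p,t}, and is jointly continuous: (p, t, z) ↦ F_{p,t}(z) is continuous on {|p| = 1} × (−1, 1) × 𝔻̄. -/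
open Complex Metric Set

/-- The Möbius map `M_w(z) = (z + w)/(z·conj(w) + 1)`. -/
noncomputable def Mob (w z : ℂ) : ℂ := (z + w) / (z * (starRingEnd ℂ) w + 1)

/-- The reflection `R_p(z) = -p²·conj(z)`. -/
def Rp (p z : ℂ) : ℂ := -p ^ 2 * (starRingEnd ℂ) z

/-- The hyperbolic reflection `τ_{p,t} = M_{-pt} ∘ R_p ∘ M_{pt}`. -/
noncomputable def tau (p : ℂ) (t : ℝ) (z : ℂ) : ℂ :=
  Mob (-(p * (t : ℂ))) (Rp p (Mob (p * (t : ℂ)) z))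

/-- The hyperbolic cap `C_{p,t} = M_{-pt}(C_{p,0})`, where `C_{p,0}` is the
half-disk `{z ∈ 𝔻̄ : Re(z·conj(p)) ≥ 0}`. -/
noncomputable def cap (p : ℂ) (t : ℝ) : Set ℂ :=
  Mob (-(p * (t : ℂ))) '' {z ∈ closedBall (0:ℂ) 1 | 0 ≤ (z * (starRingEnd ℂ) p).re}

/-- The geodesic `γ_{p,t}` bounding the cap `C_{p,t}`. -/
noncomputable def geo (p : ℂ) (t : ℝ) : Set ℂ :=
  Mob (-(p * (t : ℂ))) '' {z ∈ closedBall (0:ℂ) 1 | (z * (starRingEnd ℂ) p).re = 0}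

open Classical in
/-- The fold map `F_{p,t}`: identity on the cap `C_{p,t}`, hyperbolic
reflection `τ_{p,t}` off the cap. -/
noncomputable def fold (p : ℂ) (t : ℝ) (z : ℂ) : ℂ :=
  if z ∈ cap p t then z else tau p t z

/-! ### Auxiliary definitions and lemmas -/

/-- Closed form of the reflection `tau`. -/
noncomputable def tauF (p : ℂ) (t : ℝ) (z : ℂ) : ℂ :=
  -(p^2 * (starRingEnd ℂ) z * (1+(t:ℂ)^2) + 2*t*p) / ((1+(t:ℂ)^2) + 2*t*p*(starRingEnd ℂ) z)

/-- Defining function of the cap. -/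
noncomputable def Gr (p : ℂ) (t : ℝ) (z : ℂ) : ℝ :=
  (1+t^2) * (z * (starRingEnd ℂ) p).re + t * (1 + Complex.normSq z)

lemma mob_denom_ne {w z : ℂ} (hz : ‖z‖ ≤ 1) (hw : ‖w‖ < 1) :
    z * (starRingEnd ℂ) w + 1 ≠ 0 := by
  intro h
  have h2 : z * (starRingEnd ℂ) w = -1 := by linear_combination h
  have : ‖z * (starRingEnd ℂ) w‖ = 1 := by rw [h2]; simp
  rw [norm_mul, Complex.norm_conj] at this
  nlinarith [norm_nonneg z, norm_nonneg w]

lemma mob_mem {w z : ℂ} (hz : ‖z‖ ≤ 1) (hw : ‖w‖ < 1) :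
    ‖Mob w z‖ ≤ 1 := by
  have hd := mob_denom_ne hz hw
  have hkey : Complex.normSq (z + w) ≤ Complex.normSq (z * (starRingEnd ℂ) w + 1) := by
    have h1 : Complex.normSq z ≤ 1 := by
      rw [← Complex.sq_norm]; nlinarith [norm_nonneg z]
    have h2 : Complex.normSq w ≤ 1 := by
      rw [← Complex.sq_norm]; nlinarith [norm_nonneg w]
    simp only [Complex.normSq_apply, Complex.add_re, Complex.add_im, Complex.mul_re,
      Complex.mul_im, Complex.conj_re, Complex.conj_im, Complex.one_re, Complex.one_im] at *
    nlinarith [mul_nonneg (sub_nonneg.2 h1) (sub_nonneg.2 h2)]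
  rw [Mob, norm_div, div_le_one (norm_pos_iff.2 hd)]
  have := Complex.sq_norm (z + w)
  have := Complex.sq_norm (z * (starRingEnd ℂ) w + 1)
  nlinarith [norm_nonneg (z + w), norm_nonneg (z * (starRingEnd ℂ) w + 1)]

lemma mob_inv {w z : ℂ} (hz : ‖z‖ ≤ 1) (hw : ‖w‖ < 1) :
    Mob w (Mob (-w) z) = z := by
  have hw' : ‖-w‖ < 1 := by simpa using hw
  have hd1 : z * (starRingEnd ℂ) (-w) + 1 ≠ 0 := mob_denom_ne hz hw'
  have hd2 : Mob (-w) z * (starRingEnd ℂ) w + 1 ≠ 0 := mob_denom_ne (mob_mem hz hw') hw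
  have hww : (1 : ℂ) - w * (starRingEnd ℂ) w ≠ 0 := by
    intro h
    have : w * (starRingEnd ℂ) w = 1 := by linear_combination -h
    rw [Complex.mul_conj] at this
    have : Complex.normSq w = 1 := by exact_mod_cast this
    rw [← Complex.sq_norm] at this
    nlinarith [norm_nonneg w]
  rw [Mob, Mob] at *
  simp only [map_neg] at *
  rw [div_add' _ _ _ hd1, div_mul_eq_mul_div, div_add' _ _ _ hd1,
    div_div_div_cancel_right₀ hd1]
  rw [div_eq_iff (by intro h; apply hww; linear_combination h)]
  ring

lemma d3_ne {p z : ℂ} {t : ℝ} (hp : ‖p‖ = 1) (hz : ‖z‖ ≤ 1)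
    (ht : |t| < 1) : ((1:ℂ)+(t:ℂ)^2) + 2*t*p*(starRingEnd ℂ) z ≠ 0 := by
  intro h
  have h2 : (2*(t:ℂ)*p*(starRingEnd ℂ) z) = -(1+(t:ℂ)^2) := by linear_combination h
  have h3 := congrArg norm h2
  simp only [norm_mul, norm_neg, Complex.norm_conj, hp] at h3
  have h5 : ‖1+(t:ℂ)^2‖ = 1 + t^2 := by
    have : ((1:ℂ)+(t:ℂ)^2) = ((1+t^2 : ℝ) : ℂ) := by push_cast; ring
    rw [this, Complex.norm_real, Real.norm_eq_abs, abs_of_pos (by positivity)]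
  rw [h5] at h3
  simp only [Complex.norm_real, Real.norm_eq_abs, Complex.norm_two] at h3
  have hle : 2*|t| * ‖z‖ ≤ 2*|t| :=
    mul_le_of_le_one_right (by positivity) hz
  nlinarith [mul_pos (sub_pos.2 ht) (sub_pos.2 ht), abs_nonneg t, abs_mul_abs_self t]

lemma tau_alg (p q w T : ℂ) (hpq : p * q = 1)
    (h2 : w * (p*T) + 1 ≠ 0) :
    (-p^2 * ((w + q*T)/(w*(p*T)+1)) + -(p*T)) /
      (-p^2 * ((w + q*T)/(w*(p*T)+1)) * (-(q*T)) + 1) =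
    -(p^2*w*(1+T^2) + 2*T*p) / ((1+T^2)+2*T*p*w) := by
  have hp0 : p ≠ 0 := fun h => by simp [h] at hpq
  have hq : q = p⁻¹ := by field_simp; linear_combination hpq
  subst hq
  have hD2 : -p^2 * ((w + p⁻¹*T)/(w*(p*T)+1)) * (-(p⁻¹*T)) + 1
      = (((1:ℂ)+T^2) + 2*T*p*w)/(w*(p*T)+1) := by
    have h2' : p * w * T + 1 ≠ 0 := by convert h2 using 1; ring
    field_simp
    ring
  have hN : -p^2 * ((w + p⁻¹*T)/(w*(p*T)+1)) + -(p*T)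
      = -(p^2*w*(1+T^2) + 2*T*p)/(w*(p*T)+1) := by
    have h2' : p * w * T + 1 ≠ 0 := by convert h2 using 1; ring
    field_simp
    ring
  rw [hD2, hN, div_div_div_cancel_right₀ h2]

lemma conj_eq_inv {p : ℂ} (hp : ‖p‖ = 1) : (starRingEnd ℂ) p = p⁻¹ := by
  have h1 : p * (starRingEnd ℂ) p = 1 := by
    rw [Complex.mul_conj, Complex.normSq_eq_norm_sq, hp]; norm_num
  field_simp [show p ≠ 0 by intro h; rw [h] at hp; simp at hp]
  linear_combination h1

lemma tau_eq {p z : ℂ} {t : ℝ} (hp : ‖p‖ = 1) (hz : ‖z‖ ≤ 1)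
    (ht : |t| < 1) : tau p t z = tauF p t z := by
  have hpt : ‖p * t‖ < 1 := by
    rw [norm_mul, hp, one_mul, Complex.norm_real, Real.norm_eq_abs]; exact ht
  have hpt' : ‖-(p * t)‖ < 1 := by rwa [norm_neg]
  have hd1 : z * (starRingEnd ℂ) (p * t) + 1 ≠ 0 := mob_denom_ne hz hpt
  have hpq : p * (starRingEnd ℂ) p = 1 := by
    rw [Complex.mul_conj, Complex.normSq_eq_norm_sq, hp]; norm_num
  have h2' : (starRingEnd ℂ) z * (p * (t:ℂ)) + 1 ≠ 0 := by
    intro h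
    apply hd1
    have := congrArg (starRingEnd ℂ) h
    simpa [map_add, map_mul, Complex.conj_conj] using this
  simp only [tau, tauF, Mob, Rp, map_div₀, map_add, map_mul, map_neg,
    Complex.conj_conj, Complex.conj_ofReal, map_one]
  exact tau_alg p ((starRingEnd ℂ) p) ((starRingEnd ℂ) z) (t:ℂ) hpq h2'

lemma tau_mem {p z : ℂ} {t : ℝ} (hp : ‖p‖ = 1) (hz : ‖z‖ ≤ 1)
    (ht : |t| < 1) : ‖tau p t z‖ ≤ 1 := by
  have hpt : ‖p * t‖ < 1 := by
    rw [norm_mul, hp, one_mul, Complex.norm_real, Real.norm_eq_abs]; exact ht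
  have hpt' : ‖-(p * t)‖ < 1 := by rwa [norm_neg]
  have hu : ‖Rp p (Mob (p * t) z)‖ ≤ 1 := by
    rw [Rp, norm_mul, norm_neg, norm_pow, hp, Complex.norm_conj]
    simpa using mob_mem hz hpt
  exact mob_mem hu hpt'

lemma re_div (x y : ℂ) :
    (x / y).re = (x * (starRingEnd ℂ) y).re / Complex.normSq y := by
  rw [Complex.div_re, Complex.mul_re, Complex.conj_re, Complex.conj_im]
  ring

lemma re_iff {p z : ℂ} {t : ℝ} (hp : ‖p‖ = 1) (hz : ‖z‖ ≤ 1)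
    (ht : |t| < 1) :
    0 ≤ (Mob (p * t) z * (starRingEnd ℂ) p).re ↔ 0 ≤ Gr p t z := by
  have hpq : p * (starRingEnd ℂ) p = 1 := by
    rw [Complex.mul_conj, Complex.normSq_eq_norm_sq, hp]; norm_num
  have hpt : ‖p * t‖ < 1 := by
    rw [norm_mul, hp, one_mul, Complex.norm_real, Real.norm_eq_abs]; exact ht
  have hd1 : z * (starRingEnd ℂ) (p * t) + 1 ≠ 0 := mob_denom_ne hz hpt
  have e1 : Mob (p * t) z * (starRingEnd ℂ) p
      = (z + p * t) * (starRingEnd ℂ) p / (z * (starRingEnd ℂ) (p * t) + 1) := by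
    rw [Mob]; ring
  have e : (z + p * ↑t) * (starRingEnd ℂ) p
        * ((starRingEnd ℂ) (z * (starRingEnd ℂ) (p * ↑t) + 1))
      = ((t * Complex.normSq z + t : ℝ) : ℂ) + z * (starRingEnd ℂ) p
        + ((t^2 : ℝ) : ℂ) * (starRingEnd ℂ) (z * (starRingEnd ℂ) p) := by
    simp only [map_add, map_mul, Complex.conj_conj, Complex.conj_ofReal, map_one]
    push_cast
    linear_combination ((t:ℂ) * (z * (starRingEnd ℂ) z) + (t:ℂ)^2 * (p * (starRingEnd ℂ) z)
      + (t:ℂ)) * hpq + (t:ℂ) * Complex.mul_conj z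
  rw [e1, re_div]
  rw [div_nonneg_iff]
  have hre : ((z + p * ↑t) * (starRingEnd ℂ) p
      * ((starRingEnd ℂ) (z * (starRingEnd ℂ) (p * ↑t) + 1))).re = Gr p t z := by
    rw [e]
    simp only [Complex.add_re, Complex.ofReal_re, Complex.re_ofReal_mul, Complex.conj_re, Gr]
    ring
  constructor
  · rintro (⟨h1, -⟩ | ⟨-, h2⟩)
    · rwa [hre] at h1
    · have := Complex.normSq_pos.2 hd1
      linarith
  · intro h
    exact Or.inl ⟨by rwa [hre], (Complex.normSq_nonneg _)⟩

lemma mem_cap_iff {p z : ℂ} {t : ℝ} (hp : ‖p‖ = 1) (ht : |t| < 1) :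
    z ∈ cap p t ↔ ‖z‖ ≤ 1 ∧ 0 ≤ Gr p t z := by
  have hpt : ‖p * t‖ < 1 := by
    rw [norm_mul, hp, one_mul, Complex.norm_real, Real.norm_eq_abs]; exact ht
  have hpt' : ‖-(p * t)‖ < 1 := by rwa [norm_neg]
  constructor
  · rintro ⟨u, ⟨hu1, hu2⟩, rfl⟩
    rw [mem_closedBall, dist_zero_right] at hu1
    have hz : ‖Mob (-(p * ↑t)) u‖ ≤ 1 := mob_mem hu1 hpt'
    refine ⟨hz, ?_⟩
    rw [← re_iff hp hz ht, mob_inv hu1 hpt]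
    exact hu2
  · rintro ⟨hz, hG⟩
    refine ⟨Mob (p * t) z, ⟨?_, (re_iff hp hz ht).2 hG⟩, ?_⟩
    · rw [mem_closedBall, dist_zero_right]
      exact mob_mem hz hpt
    · have := mob_inv hz hpt'
      rwa [neg_neg] at this

set_option maxHeartbeats 1000000 in
lemma algC (p q z w T : ℂ) (hpq : p * q = 1)
    (hd : ((1:ℂ)+T^2) + 2*T*p*w ≠ 0) (hd' : ((1:ℂ)+T^2) + 2*T*q*z ≠ 0) :
    ((1+T^2) * ((-(p^2*w*(1+T^2)+2*T*p)/((1+T^2)+2*T*p*w)) * q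
        + (-(q^2*z*(1+T^2)+2*T*q)/((1+T^2)+2*T*q*z)) * p)
      + 2*T*(1 + (-(p^2*w*(1+T^2)+2*T*p)/((1+T^2)+2*T*p*w))
        * (-(q^2*z*(1+T^2)+2*T*q)/((1+T^2)+2*T*q*z))))
      * (((1+T^2)+2*T*p*w) * (((1+T^2)+2*T*q*z)))
    = -((1-T^2)^2) * ((1+T^2)*(z*q + w*p) + 2*T*(1+z*w)) := by
  have e1 : ((1+T^2) * ((-(p^2*w*(1+T^2)+2*T*p)/((1+T^2)+2*T*p*w)) * q
        + (-(q^2*z*(1+T^2)+2*T*q)/((1+T^2)+2*T*q*z)) * p)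
      + 2*T*(1 + (-(p^2*w*(1+T^2)+2*T*p)/((1+T^2)+2*T*p*w))
        * (-(q^2*z*(1+T^2)+2*T*q)/((1+T^2)+2*T*q*z))))
      * (((1+T^2)+2*T*p*w) * (((1+T^2)+2*T*q*z)))
      = -(1+T^2) * ((p^2*w*(1+T^2)+2*T*p)*q*(((1:ℂ)+T^2)+2*T*q*z)
          + (q^2*z*(1+T^2)+2*T*q)*p*(((1:ℂ)+T^2)+2*T*p*w))
        + 2*T*((((1:ℂ)+T^2)+2*T*p*w)*(((1:ℂ)+T^2)+2*T*q*z)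
          + (p^2*w*(1+T^2)+2*T*p)*(q^2*z*(1+T^2)+2*T*q)) := by
    have ha : 1 + T ^ 2 + T * p * w * 2 ≠ 0 := by convert hd using 1; ring
    have hb : 1 + T ^ 2 + T * 2 * q * z ≠ 0 := by convert hd' using 1; ring
    field_simp
    ring
  rw [e1]
  linear_combination ((-4)*T + (-4)*T^5 + (-2)*z*w*T + 4*z*w*T^3 + (-2)*z*w*T^5
    + (-1)*q*z + (-3)*q*z*T^2 + (-3)*q*z*T^4 + (-1)*q*z*T^6
    + (-1)*p*w + (-3)*p*w*T^2 + (-3)*p*w*T^4 + (-1)*p*w*T^6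
    + (-2)*p*q*z*w*T + (-4)*p*q*z*w*T^3 + (-2)*p*q*z*w*T^5) * hpq

lemma hHc {p : ℂ} (t : ℝ) (x : ℂ) (hp : ‖p‖ = 1) :
    (1+(t:ℂ)^2) * (x * (starRingEnd ℂ) p + (starRingEnd ℂ) x * p)
      + 2*(t:ℂ)*(1 + x * (starRingEnd ℂ) x)
    = ((2 * Gr p t x : ℝ) : ℂ) := by
  have h1 : x * (starRingEnd ℂ) p + (starRingEnd ℂ) x * p
      = ((2 * (x * (starRingEnd ℂ) p).re : ℝ) : ℂ) := by
    rw [← Complex.add_conj]; simp [map_mul]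
  have h2 := Complex.mul_conj x
  rw [Gr]
  push_cast at h1 ⊢
  linear_combination (1+(t:ℂ)^2) * h1 + 2*(t:ℂ)*h2

lemma tauF_fix {p z : ℂ} {t : ℝ} (hp : ‖p‖ = 1) (hz : ‖z‖ ≤ 1)
    (ht : |t| < 1) (hG : Gr p t z = 0) : tauF p t z = z := by
  have hpq : p * (starRingEnd ℂ) p = 1 := by
    rw [Complex.mul_conj, Complex.normSq_eq_norm_sq, hp]; norm_num
  have hd3 := d3_ne hp hz ht
  have hHc0 : (1+(t:ℂ)^2) * (z * (starRingEnd ℂ) p + (starRingEnd ℂ) z * p)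
      + 2*(t:ℂ)*(1 + z * (starRingEnd ℂ) z) = 0 := by
    rw [hHc t z hp, hG]; simp
  rw [tauF, div_eq_iff hd3]
  linear_combination (-p) * hHc0 + (1+(t:ℂ)^2)*z*hpq

lemma conj_d3 {p z : ℂ} {t : ℝ} :
    (starRingEnd ℂ) ((1+(t:ℂ)^2) + 2*t*p*(starRingEnd ℂ) z)
      = (1+(t:ℂ)^2) + 2*t*((starRingEnd ℂ) p)*z := by
  simp [map_add, map_mul, map_ofNat, Complex.conj_conj, Complex.conj_ofReal]

lemma conj_tauF {p z : ℂ} {t : ℝ} :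
    (starRingEnd ℂ) (tauF p t z)
      = -(((starRingEnd ℂ) p)^2*z*(1+(t:ℂ)^2) + 2*t*((starRingEnd ℂ) p))
        / ((1+(t:ℂ)^2) + 2*t*((starRingEnd ℂ) p)*z) := by
  rw [tauF, map_div₀]
  congr 1
  · simp [map_add, map_mul, map_pow, map_ofNat, Complex.conj_conj, Complex.conj_ofReal]
  · exact conj_d3

lemma Gr_tauF {p z : ℂ} {t : ℝ} (hp : ‖p‖ = 1) (hz : ‖z‖ ≤ 1)
    (ht : |t| < 1) :
    Gr p t (tauF p t z) * Complex.normSq ((1+(t:ℂ)^2) + 2*t*p*(starRingEnd ℂ) z)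
      = -(1-t^2)^2 * Gr p t z := by
  have hpq : p * (starRingEnd ℂ) p = 1 := by
    rw [Complex.mul_conj, Complex.normSq_eq_norm_sq, hp]; norm_num
  have hd3 := d3_ne hp hz ht
  have hd3' : ((1:ℂ)+(t:ℂ)^2) + 2*t*((starRingEnd ℂ) p)*z ≠ 0 := by
    rw [← conj_d3]
    simpa only [ne_eq, map_eq_zero] using hd3
  have E := algC p ((starRingEnd ℂ) p) z ((starRingEnd ℂ) z) t hpq hd3 hd3'
  have h1 := hHc t (tauF p t z) hp
  rw [conj_tauF] at h1
  have h2 := hHc t z hp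
  have h3 : ((Complex.normSq ((1+(t:ℂ)^2) + 2*t*p*(starRingEnd ℂ) z) : ℝ) : ℂ)
      = (((1:ℂ)+(t:ℂ)^2) + 2*t*p*(starRingEnd ℂ) z)
        * (((1:ℂ)+(t:ℂ)^2) + 2*t*((starRingEnd ℂ) p)*z) := by
    rw [← Complex.mul_conj, conj_d3]
  rw [← tauF] at E
  have key : ((2 * Gr p t (tauF p t z) * Complex.normSq ((1+(t:ℂ)^2)
        + 2*t*p*(starRingEnd ℂ) z) : ℝ) : ℂ)
      = ((2 * (-(1-t^2)^2 * Gr p t z) : ℝ) : ℂ) := by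
    push_cast
    push_cast at h1 h2
    linear_combination E - ((((1:ℂ)+(t:ℂ)^2) + 2*t*p*(starRingEnd ℂ) z)
        * (((1:ℂ)+(t:ℂ)^2) + 2*t*((starRingEnd ℂ) p)*z)) * h1
      - (1-(t:ℂ)^2)^2 * h2
      + 2*((Gr p t (tauF p t z) : ℝ) : ℂ) * h3
  have := Complex.ofReal_inj.1 key
  linarith

lemma Gr_neg {p z : ℂ} {t : ℝ} : Gr (-p) (-t) z = -Gr p t z := by
  simp [Gr]
  ring

lemma Gr_cont : Continuous (fun q : ℂ × ℝ × ℂ => Gr q.1 q.2.1 q.2.2) := by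
  unfold Gr
  have h := Complex.continuous_normSq
  fun_prop

lemma tauF_contOn : ContinuousOn (fun q : ℂ × ℝ × ℂ => tauF q.1 q.2.1 q.2.2)
    ((sphere (0:ℂ) 1) ×ˢ (Set.Ioo (-1 : ℝ) 1) ×ˢ (closedBall (0:ℂ) 1)) := by
  unfold tauF
  have h1 : Continuous (fun z : ℂ => (starRingEnd ℂ) z) := Complex.continuous_conj
  have h2 := Complex.continuous_ofReal
  apply ContinuousOn.div
  · exact Continuous.continuousOn (by fun_prop)
  · exact Continuous.continuousOn (by fun_prop)
  · rintro ⟨p, t, z⟩ ⟨hp, ht, hz⟩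
    have hp' : ‖p‖ = 1 := by
      rwa [mem_sphere_zero_iff_norm] at hp
    have hz' : ‖z‖ ≤ 1 := by
      rwa [mem_closedBall, dist_zero_right] at hz
    exact d3_ne hp' hz' (abs_lt.2 ⟨ht.1, ht.2⟩)

lemma fold_mem {p z : ℂ} {t : ℝ} (hp : ‖p‖ = 1) (hz : ‖z‖ ≤ 1)
    (ht : |t| < 1) : fold p t z ∈ cap p t := by
  rw [fold]
  split_ifs with h
  · exact h
  · have hG : Gr p t z < 0 := by
      by_contra hG
      exact h ((mem_cap_iff hp ht).2 ⟨hz, not_lt.1 hG⟩)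
    rw [tau_eq hp hz ht]
    refine (mem_cap_iff hp ht).2 ⟨?_, ?_⟩
    · rw [← tau_eq hp hz ht]; exact tau_mem hp hz ht
    · have hid := Gr_tauF hp hz ht (p := p)
      have hpos : 0 < Complex.normSq ((1+(t:ℂ)^2) + 2*t*p*(starRingEnd ℂ) z) :=
        Complex.normSq_pos.2 (d3_ne hp hz ht)
      nlinarith [sq_nonneg (1 - t^2)]

theorem stmt11 :
    (∀ p : ℂ, ‖p‖ = 1 → ∀ t ∈ Set.Ioo (-1 : ℝ) 1,
      (∀ z ∈ cap p t ∩ cap (-p) (-t), tau p t z = z) ∧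
      (∀ z ∈ closedBall (0:ℂ) 1, fold p t z ∈ cap p t)) ∧
    ContinuousOn (fun q : ℂ × ℝ × ℂ => fold q.1 q.2.1 q.2.2)
      ((sphere (0:ℂ) 1) ×ˢ (Set.Ioo (-1 : ℝ) 1) ×ˢ (closedBall (0:ℂ) 1)) := by
  constructor
  · intro p hp t ht
    have ht' : |t| < 1 := abs_lt.2 ⟨ht.1, ht.2⟩
    have ht'' : |(-t)| < 1 := by rwa [abs_neg]
    have hp' : ‖-p‖ = 1 := by rwa [norm_neg]
    constructor
    · rintro z ⟨h1, h2⟩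
      obtain ⟨hz, hG1⟩ := (mem_cap_iff hp ht').1 h1
      obtain ⟨-, hG2⟩ := (mem_cap_iff hp' ht'').1 h2
      rw [Gr_neg] at hG2
      have hG : Gr p t z = 0 := le_antisymm (by linarith) hG1
      rw [tau_eq hp hz ht']
      exact tauF_fix hp hz ht' hG
    · intro z hz
      rw [mem_closedBall, dist_zero_right] at hz
      exact fold_mem hp hz ht'
  · intro x hx
    obtain ⟨hp, ht, hz⟩ := hx
    have hp' : ‖x.1‖ = 1 := by
      rwa [mem_sphere_zero_iff_norm] at hp
    have hz' : ‖x.2.2‖ ≤ 1 := by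
      rwa [mem_closedBall, dist_zero_right] at hz
    have ht' : |x.2.1| < 1 := abs_lt.2 ⟨ht.1, ht.2⟩
    set D := (sphere (0:ℂ) 1) ×ˢ (Set.Ioo (-1 : ℝ) 1) ×ˢ (closedBall (0:ℂ) 1) with hD
    have hmem : ∀ q ∈ D, ‖q.1‖ = 1 ∧ |q.2.1| < 1 ∧ ‖q.2.2‖ ≤ 1 := by
      rintro q ⟨h1, h2, h3⟩
      exact ⟨by rwa [mem_sphere_zero_iff_norm] at h1,
        abs_lt.2 ⟨h2.1, h2.2⟩,
        by rwa [mem_closedBall, dist_zero_right] at h3⟩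
    have hxD : x ∈ D := ⟨hp, ht, hz⟩
    -- fold agrees with the identity where `Gr ≥ 0`, and with `tauF` where `Gr ≤ 0`
    have hfold_id : ∀ q ∈ D, 0 ≤ Gr q.1 q.2.1 q.2.2 → fold q.1 q.2.1 q.2.2 = q.2.2 := by
      intro q hq hG
      obtain ⟨h1, h2, h3⟩ := hmem q hq
      rw [fold, if_pos ((mem_cap_iff h1 h2).2 ⟨h3, hG⟩)]
    have hfold_tau : ∀ q ∈ D, Gr q.1 q.2.1 q.2.2 ≤ 0 →
        fold q.1 q.2.1 q.2.2 = tauF q.1 q.2.1 q.2.2 := by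
      intro q hq hG
      obtain ⟨h1, h2, h3⟩ := hmem q hq
      rcases lt_or_eq_of_le hG with hlt | heq
      · rw [fold, if_neg, tau_eq h1 h3 h2]
        intro hc
        exact absurd ((mem_cap_iff h1 h2).1 hc).2 (not_le.2 hlt)
      · rw [fold, if_pos ((mem_cap_iff h1 h2).2 ⟨h3, le_of_eq heq.symm⟩),
          tauF_fix h1 h3 h2 heq]
    have hGc : ContinuousWithinAt (fun q : ℂ × ℝ × ℂ => Gr q.1 q.2.1 q.2.2) D x :=
      Gr_cont.continuousWithinAt
    have hid : ContinuousWithinAt (fun q : ℂ × ℝ × ℂ => q.2.2) D x :=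
      (continuous_snd.comp continuous_snd).continuousWithinAt
    have htc : ContinuousWithinAt (fun q : ℂ × ℝ × ℂ => tauF q.1 q.2.1 q.2.2) D x :=
      tauF_contOn x hxD
    rcases lt_trichotomy (Gr x.1 x.2.1 x.2.2) 0 with hG | hG | hG
    · -- locally `Gr < 0`, fold = tauF
      refine htc.congr_of_eventuallyEq ?_ (hfold_tau x hxD hG.le)
      have hU : {q : ℂ × ℝ × ℂ | Gr q.1 q.2.1 q.2.2 < 0} ∈ nhds x :=
        (isOpen_lt Gr_cont continuous_const).mem_nhds hG
      filter_upwards [self_mem_nhdsWithin, Filter.eventually_iff_exists_mem.2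
        ⟨_, nhdsWithin_le_nhds hU, fun q hq => hq⟩] with q hqD hqU
      exact hfold_tau q hqD (le_of_lt hqU)
    · -- boundary case: glue along `{Gr ≥ 0}` and `{Gr ≤ 0}`
      have hA : ContinuousWithinAt (fun q : ℂ × ℝ × ℂ => fold q.1 q.2.1 q.2.2)
          (D ∩ {q : ℂ × ℝ × ℂ | 0 ≤ Gr q.1 q.2.1 q.2.2}) x := by
        refine (hid.mono inter_subset_left).congr ?_ ?_
        · rintro q ⟨hqD, hqG⟩
          exact hfold_id q hqD hqG
        · exact hfold_id x hxD hG.ge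
      have hB : ContinuousWithinAt (fun q : ℂ × ℝ × ℂ => fold q.1 q.2.1 q.2.2)
          (D ∩ {q : ℂ × ℝ × ℂ | Gr q.1 q.2.1 q.2.2 ≤ 0}) x := by
        refine (htc.mono inter_subset_left).congr ?_ ?_
        · rintro q ⟨hqD, hqG⟩
          exact hfold_tau q hqD hqG
        · exact hfold_tau x hxD hG.le
      refine (hA.union hB).mono ?_
      intro q hq
      rcases le_total 0 (Gr q.1 q.2.1 q.2.2) with h | h
      · exact Or.inl ⟨hq, h⟩
      · exact Or.inr ⟨hq, h⟩
    · -- locally `Gr > 0`, fold = id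
      refine hid.congr_of_eventuallyEq ?_ (hfold_id x hxD hG.le)
      have hU : {q : ℂ × ℝ × ℂ | 0 < Gr q.1 q.2.1 q.2.2} ∈ nhds x :=
        (isOpen_lt continuous_const Gr_cont).mem_nhds hG
      filter_upwards [self_mem_nhdsWithin, Filter.eventually_iff_exists_mem.2
        ⟨_, nhdsWithin_le_nhds hU, fun q hq => hq⟩] with q hqD hqU
      exact hfold_id q hqD (le_of_lt hqU)
end

section
/- (Hersch–Szegő normalization, existence.) Let Ω ⊂ ℂ be a bounded open set, let f : Ω → ℝ be integrable with f ≥ 0 and ∫_Ω f dA > 0, and let g : [0,1] → ℝ be continuous with g(0) = 0 and g(1) > 0. Define v : 𝔻̄ → ℂ by v(z) = g(|z|)·z/|z| for z ≠ 0 and v(0) = 0 (v is continuous). Let T : Ω → 𝔻 be continuous, and for w ∈ 𝔻̄ define V(w) = ∫_Ω v(M_w(T(z))) f(z) dA(z). Then V is continuous on 𝔻̄, V(w) = g(1)·(∫_Ω f dA)·w ≠ 0 for every w with |w| = 1, and there exists w ∈ 𝔻 with V(w) = 0. -/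
open Complex Metric Set MeasureTheory

open Classical in
/-- The function `v(z) = g(|z|)·z/|z|` for `z ≠ 0`, with `v(0) = 0`. -/
noncomputable def vfun (g : ℝ → ℝ) (z : ℂ) : ℂ :=
  if z = 0 then 0 else (g ‖z‖ : ℂ) * z / (‖z‖ : ℂ)


lemma Mob_denom_ne (w z : ℂ) (hz : ‖z‖ < 1) (hw : ‖w‖ ≤ 1) :
    z * (starRingEnd ℂ) w + 1 ≠ 0 := by
  intro h
  have h2 : z * (starRingEnd ℂ) w = -1 := by linear_combination h
  have : ‖z * (starRingEnd ℂ) w‖ < 1 := by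
    rw [norm_mul, Complex.norm_conj]
    nlinarith [norm_nonneg z, norm_nonneg w]
  rw [h2] at this; simp at this

lemma normSq_identity (w z : ℂ) :
    Complex.normSq (z * (starRingEnd ℂ) w + 1) - Complex.normSq (z + w)
      = (1 - Complex.normSq z) * (1 - Complex.normSq w) := by
  simp [Complex.normSq_apply, Complex.add_re, Complex.add_im, Complex.mul_re, Complex.mul_im,
    Complex.conj_re, Complex.conj_im]
  ring

lemma Mob_mem_closedBall (w z : ℂ) (hz : ‖z‖ < 1) (hw : ‖w‖ ≤ 1) :
    Mob w z ∈ closedBall (0:ℂ) 1 := by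
  have hd := Mob_denom_ne w z hz hw
  have h1 : Complex.normSq z < 1 := by
    rw [← Complex.sq_norm]; nlinarith [norm_nonneg z]
  have h2 : Complex.normSq w ≤ 1 := by
    rw [← Complex.sq_norm]; nlinarith [norm_nonneg w]
  have key := normSq_identity w z
  have hle : Complex.normSq (z + w) ≤ Complex.normSq (z * (starRingEnd ℂ) w + 1) := by nlinarith
  simp only [mem_closedBall, dist_zero_right, Mob, norm_div]
  rw [div_le_one (norm_pos_iff.mpr hd)]
  have := Complex.sq_norm (z + w)
  have := Complex.sq_norm (z * (starRingEnd ℂ) w + 1)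
  nlinarith [norm_nonneg (z + w), norm_nonneg (z * (starRingEnd ℂ) w + 1)]

lemma Mob_boundary (w z : ℂ) (hz : ‖z‖ < 1) (hw : ‖w‖ = 1) :
    Mob w z = w := by
  have hd := Mob_denom_ne w z hz hw.le
  rw [Mob, div_eq_iff hd]
  have h1 : w * (starRingEnd ℂ) w = 1 := by
    rw [Complex.mul_conj]; norm_cast; rw [← Complex.sq_norm, hw]; norm_num
  linear_combination (-z) * h1

lemma Mob_continuousOn (z : ℂ) (hz : ‖z‖ < 1) :
    ContinuousOn (fun w => Mob w z) (closedBall (0:ℂ) 1) := by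
  apply ContinuousOn.div
  · fun_prop
  · exact ((continuous_const.mul continuous_star).add continuous_const).continuousOn
  · intro w hw
    exact Mob_denom_ne w z hz (by simpa using mem_closedBall_zero_iff.mp hw)


lemma vfun_abs_le (g : ℝ → ℝ) (z : ℂ) :
    ‖vfun g z‖ ≤ |g (‖z‖)| + |g 0| := by
  unfold vfun
  split
  · simp; positivity
  · rename_i h
    have hz : (0:ℝ) < ‖z‖ := norm_pos_iff.mpr h
    rw [norm_div, norm_mul]
    simp only [Complex.norm_real, Real.norm_eq_abs, abs_norm]
    rw [mul_div_assoc, div_self hz.ne', mul_one]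
    nlinarith [abs_nonneg (g 0)]

lemma vfun_continuousOn (g : ℝ → ℝ) (hgc : ContinuousOn g (Set.Icc 0 1)) (hg0 : g 0 = 0) :
    ContinuousOn (vfun g) (closedBall (0:ℂ) 1) := by
  intro z hz
  have habs : ‖z‖ ≤ 1 := by simpa [] using mem_closedBall_zero_iff.mp hz
  by_cases h0 : z = 0
  · -- continuity at 0
    subst h0
    rw [ContinuousWithinAt]
    have hv0 : vfun g 0 = 0 := by simp [vfun]
    rw [hv0]
    apply squeeze_zero_norm (a := fun z => |g (‖z‖)| + |g 0|)
    · intro t; exact vfun_abs_le g t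
    · have h1 : Filter.Tendsto (fun z : ℂ => ‖z‖) (nhdsWithin 0 (closedBall (0:ℂ) 1)) (nhdsWithin 0 (Set.Icc 0 1)) := by
        apply Filter.Tendsto.inf
        · simpa using ((continuous_norm (E := ℂ)).tendsto 0)
        · rw [Filter.tendsto_principal]
          apply Filter.eventually_principal.mpr
          intro x hx
          exact ⟨norm_nonneg x, by simpa [] using mem_closedBall_zero_iff.mp hx⟩
      have h2 : ContinuousWithinAt g (Set.Icc 0 1) 0 := hgc 0 (by norm_num)
      rw [ContinuousWithinAt] at h2
      have := (h2.comp h1).abs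
      rw [hg0] at this
      simpa [hg0] using this.add_const |g 0|
  · -- continuity at z ≠ 0
    have hzpos : (0:ℝ) < ‖z‖ := norm_pos_iff.mpr h0
    have heq : ∀ᶠ t in nhdsWithin z (closedBall (0:ℂ) 1),
        vfun g t = (g (‖t‖) : ℂ) * t / (‖t‖ : ℂ) := by
      filter_upwards [eventually_nhdsWithin_of_eventually_nhds
        (eventually_ne_nhds h0)] with t ht
      simp [vfun, ht]
    apply ContinuousWithinAt.congr_of_eventuallyEq _ heq (by simp [vfun, h0])
    have habs' : ContinuousWithinAt (fun t : ℂ => ‖t‖) (closedBall (0:ℂ) 1) z :=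
      continuous_norm.continuousWithinAt
    have hmaps : MapsTo (fun t : ℂ => ‖t‖) (closedBall (0:ℂ) 1) (Set.Icc 0 1) := by
      intro x hx
      exact ⟨norm_nonneg x, by simpa [] using mem_closedBall_zero_iff.mp hx⟩
    have hg' : ContinuousWithinAt (fun t : ℂ => (g (‖t‖) : ℂ))
        (closedBall (0:ℂ) 1) z := by
      apply Complex.continuous_ofReal.continuousAt.comp_continuousWithinAt
      exact (hgc _ ⟨hzpos.le, habs⟩).comp habs' hmaps
    exact (hg'.mul continuousWithinAt_id).div
      (Complex.continuous_ofReal.continuousWithinAt.comp habs' (mapsTo_univ _ _))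
      (by simpa using hzpos.ne')

lemma vfun_bound (g : ℝ → ℝ) (hgc : ContinuousOn g (Set.Icc 0 1)) :
    ∃ C : ℝ, 0 ≤ C ∧ ∀ z ∈ closedBall (0:ℂ) 1, ‖vfun g z‖ ≤ C := by
  obtain ⟨x₀, hx₀, hmax⟩ := (isCompact_Icc (a := (0:ℝ)) (b := 1)).exists_isMaxOn
    ⟨0, by norm_num⟩ (hgc.abs)
  refine ⟨2 * |g x₀|, by positivity, fun z hz => ?_⟩
  have habs : ‖z‖ ∈ Set.Icc (0:ℝ) 1 :=
    ⟨norm_nonneg z, by simpa [] using mem_closedBall_zero_iff.mp hz⟩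
  have h1 := hmax habs
  have h2 := hmax (Set.mem_Icc.mpr ⟨le_refl 0, by norm_num⟩)
  have := vfun_abs_le g z
  simp only [Set.mem_setOf_eq] at h1 h2
  linarith


-- step lemma: transfer a log-lift from u to a nearby loop v
lemma lift_step (u v L : ℝ → ℂ) (s : Set ℝ)
    (hLc : ContinuousOn L s) (hL : ∀ θ ∈ s, Complex.exp (L θ) = u θ)
    (huc : ContinuousOn u s) (hvc : ContinuousOn v s)
    (hclose : ∀ θ ∈ s, ‖v θ - u θ‖ < ‖u θ‖) :
    ∃ L' : ℝ → ℂ, ContinuousOn L' s ∧ (∀ θ ∈ s, Complex.exp (L' θ) = v θ) ∧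
      (∀ θ ∈ s, L' θ - L θ = Complex.log (v θ / u θ)) := by
  have hu0 : ∀ θ ∈ s, u θ ≠ 0 := by
    intro θ hθ h
    have h2 := hclose θ hθ; rw [h] at h2; simp at h2
    exact absurd h2 (norm_nonneg (v θ)).not_gt
  have hv0 : ∀ θ ∈ s, v θ ≠ 0 := by
    intro θ hθ h
    have h2 := hclose θ hθ; rw [h] at h2; simp at h2
  have hslit : ∀ θ ∈ s, v θ / u θ ∈ Complex.slitPlane := by
    intro θ hθ
    have h1 : ‖v θ / u θ - 1‖ < 1 := by
      rw [div_sub_one (hu0 θ hθ), norm_div, div_lt_one (norm_pos_iff.mpr (hu0 θ hθ))]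
      exact hclose θ hθ
    rw [Complex.mem_slitPlane_iff]
    by_contra hcon
    push_neg at hcon
    have hre : (v θ / u θ).re ≤ 0 := hcon.1
    have him : (v θ / u θ).im = 0 := hcon.2
    have : |(v θ / u θ - 1).re| ≤ ‖v θ / u θ - 1‖ := Complex.abs_re_le_norm _
    simp only [Complex.sub_re, Complex.one_re] at this
    rw [abs_of_nonpos (by linarith)] at this
    linarith
  refine ⟨fun θ => L θ + Complex.log (v θ / u θ), ?_, ?_, ?_⟩
  · apply hLc.add
    intro θ hθ
    have hdiv : ContinuousWithinAt (fun t => v t / u t) s θ :=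
      (hvc θ hθ).div (huc θ hθ) (hu0 θ hθ)
    exact hdiv.clog (hslit θ hθ)
  · intro θ hθ
    rw [Complex.exp_add, hL θ hθ, Complex.exp_log (div_ne_zero (hv0 θ hθ) (hu0 θ hθ))]
    field_simp [hu0 θ hθ]
  · intro θ hθ; ring

lemma no_nonvanishing (W : ℂ → ℂ) (hWc : ContinuousOn W (closedBall (0:ℂ) 1))
    (hne : ∀ w ∈ closedBall (0:ℂ) 1, W w ≠ 0)
    (c : ℝ) (hc : 0 < c)
    (hbd : ∀ w : ℂ, ‖w‖ = 1 → W w = (c : ℂ) * w) : False := by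
  set s : Set ℝ := Set.Icc 0 (2 * Real.pi) with hs
  -- the parametrized loops
  set F : ℝ → ℝ → ℂ := fun r θ => W ((r : ℂ) * Complex.exp (θ * Complex.I)) with hF
  have hmem : ∀ r ∈ Set.Icc (0:ℝ) 1, ∀ θ : ℝ,
      (r : ℂ) * Complex.exp (θ * Complex.I) ∈ closedBall (0:ℂ) 1 := by
    intro r hr θ
    rw [mem_closedBall_zero_iff]
    simp only [norm_mul, Complex.norm_real, Real.norm_eq_abs]
    rw [Complex.norm_exp_ofReal_mul_I, mul_one, _root_.abs_of_nonneg hr.1]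
    exact hr.2
  -- min of |W|
  obtain ⟨w₀, hw₀, hmin⟩ := (isCompact_closedBall (0:ℂ) 1).exists_isMinOn
    ⟨0, by simp⟩ hWc.norm
  set m : ℝ := ‖W w₀‖ with hm
  have hm0 : 0 < m := by
    rw [hm]; exact norm_pos_iff.mpr (hne w₀ hw₀)
  have hinner : Continuous (fun p : ℝ × ℝ => (p.1 : ℂ) * Complex.exp ((p.2 : ℂ) * Complex.I)) :=
    (Complex.continuous_ofReal.comp continuous_fst).mul
      (Complex.continuous_exp.comp ((Complex.continuous_ofReal.comp continuous_snd).mul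
        continuous_const))
  set K : Set (ℝ × ℝ) := (Set.Icc (0:ℝ) 1) ×ˢ s with hK
  have hKmaps : MapsTo (fun p : ℝ × ℝ => (p.1 : ℂ) * Complex.exp ((p.2 : ℂ) * Complex.I))
      K (closedBall (0:ℂ) 1) := fun p hp => hmem p.1 hp.1 p.2
  have hΦc : ContinuousOn (fun p : ℝ × ℝ => F p.1 p.2) K :=
    hWc.comp hinner.continuousOn hKmaps
  have hKc : IsCompact K := isCompact_Icc.prod isCompact_Icc
  have hUC := hKc.uniformContinuousOn_of_continuous hΦc
  rw [Metric.uniformContinuousOn_iff] at hUC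
  obtain ⟨δ, hδ0, hδ⟩ := hUC m hm0
  obtain ⟨N, hN⟩ := exists_nat_one_div_lt hδ0
  have hN0 : (0:ℝ) < (N:ℝ) + 1 := by positivity
  -- loops are continuous and have min modulus m
  have hFc : ∀ r ∈ Set.Icc (0:ℝ) 1, ContinuousOn (F r) s := by
    intro r hr
    exact hWc.comp (continuous_const.mul (Complex.continuous_exp.comp
      (Complex.continuous_ofReal.mul continuous_const))).continuousOn
      (fun θ _ => hmem r hr θ)
  have hFm : ∀ r ∈ Set.Icc (0:ℝ) 1, ∀ θ : ℝ, m ≤ ‖F r θ‖ :=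
    fun r hr θ => hmin (hmem r hr θ)
  have hFper : ∀ r : ℝ, F r (2 * Real.pi) = F r 0 := by
    intro r
    simp only [hF]
    congr 1
    push_cast
    rw [Complex.exp_two_pi_mul_I]
    simp
  have h2π : (0:ℝ) ≤ 2 * Real.pi := by positivity
  have h0s : (0:ℝ) ∈ s := ⟨le_refl _, h2π⟩
  have h2πs : (2 * Real.pi) ∈ s := ⟨h2π, le_refl _⟩
  -- induction: each loop F (j/(N+1)) has a lift with zero gap
  have key : ∀ j : ℕ, j ≤ N + 1 → ∃ L : ℝ → ℂ, ContinuousOn L s ∧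
      (∀ θ ∈ s, Complex.exp (L θ) = F ((j:ℝ)/((N:ℝ)+1)) θ) ∧ L (2 * Real.pi) = L 0 := by
    intro j hj
    induction j with
    | zero =>
      refine ⟨fun _ => Complex.log (W 0), continuousOn_const, ?_, rfl⟩
      intro θ hθ
      rw [Complex.exp_log (hne 0 (by simp))]
      simp [hF]
    | succ i ih =>
      obtain ⟨L, hLc, hL, hgap⟩ := ih (by omega)
      have hri : (i:ℝ)/((N:ℝ)+1) ∈ Set.Icc (0:ℝ) 1 := by
        constructor
        · positivity
        · rw [div_le_one hN0]
          have : (i:ℝ) ≤ (N:ℝ) := by exact_mod_cast Nat.le_of_succ_le_succ hj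
          linarith
      have hri1 : ((i:ℝ)+1)/((N:ℝ)+1) ∈ Set.Icc (0:ℝ) 1 := by
        constructor
        · positivity
        · rw [div_le_one hN0]; have : (i:ℝ) + 1 ≤ (N:ℝ) + 1 := by
            push_cast; have : (i:ℕ) + 1 ≤ N + 1 := hj; exact_mod_cast this
          linarith
      have hclose : ∀ θ ∈ s, ‖F (((i:ℝ)+1)/((N:ℝ)+1)) θ - F ((i:ℝ)/((N:ℝ)+1)) θ‖
          < ‖F ((i:ℝ)/((N:ℝ)+1)) θ‖ := by
        intro θ hθ
        have hxK : (((i:ℝ)+1)/((N:ℝ)+1), θ) ∈ K := ⟨hri1, hθ⟩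
        have hyK : ((i:ℝ)/((N:ℝ)+1), θ) ∈ K := ⟨hri, hθ⟩
        have hdist : dist ((((i:ℝ)+1)/((N:ℝ)+1), θ)) (((i:ℝ)/((N:ℝ)+1), θ)) < δ := by
          rw [Prod.dist_eq]
          simp only [dist_self]
          rw [max_eq_left dist_nonneg]
          rw [Real.dist_eq]
          have : ((i:ℝ)+1)/((N:ℝ)+1) - (i:ℝ)/((N:ℝ)+1) = 1/((N:ℝ)+1) := by
            field_simp; ring
          rw [this, abs_of_pos (by positivity)]
          exact hN
        have := hδ _ hxK _ hyK hdist
        rw [dist_eq_norm] at this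
        calc ‖F (((i:ℝ)+1)/((N:ℝ)+1)) θ - F ((i:ℝ)/((N:ℝ)+1)) θ‖ < m := this
        _ ≤ ‖F ((i:ℝ)/((N:ℝ)+1)) θ‖ := hFm _ hri θ
      obtain ⟨L', hL'c, hL', hdiff⟩ := lift_step (F ((i:ℝ)/((N:ℝ)+1))) (F (((i:ℝ)+1)/((N:ℝ)+1)))
        L s hLc hL (hFc _ hri) (hFc _ hri1) hclose
      refine ⟨L', hL'c, ?_, ?_⟩
      · intro θ hθ
        rw [hL' θ hθ]
        norm_num
      · have e1 := hdiff _ h2πs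
        have e2 := hdiff _ h0s
        rw [hFper, hFper] at e1
        have : L' (2 * Real.pi) - L' 0 = L (2 * Real.pi) - L 0 := by
          have := e1.trans e2.symm
          linear_combination this
        rw [hgap] at this
        linear_combination this
  -- conclusion at j = N+1
  obtain ⟨L, hLc, hL, hgap⟩ := key (N + 1) (le_refl _)
  have hr1 : ((N:ℝ)+1)/((N:ℝ)+1) = 1 := div_self hN0.ne'
  have hLlift : ∀ θ ∈ s, Complex.exp (L θ) = (c:ℂ) * Complex.exp ((θ:ℂ) * Complex.I) := by
    intro θ hθ
    have := hL θ hθ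
    push_cast at this
    rw [hr1] at this
    rw [this, hF]
    simp only [Complex.ofReal_one, one_mul]
    rw [hbd _ (Complex.norm_exp_ofReal_mul_I θ)]
  -- explicit lift
  set L' : ℝ → ℂ := fun θ => (Real.log c : ℂ) + (θ:ℂ) * Complex.I with hL'
  have hL'lift : ∀ θ : ℝ, Complex.exp (L' θ) = (c:ℂ) * Complex.exp ((θ:ℂ) * Complex.I) := by
    intro θ
    rw [hL', Complex.exp_add, ← Complex.ofReal_exp, Real.exp_log hc]
  have hint : ∀ θ ∈ s, ∃ n : ℤ, L θ - L' θ = n * (2 * Real.pi * Complex.I) := by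
    intro θ hθ
    have : Complex.exp (L θ - L' θ) = 1 := by
      rw [Complex.exp_sub, hLlift θ hθ, hL'lift θ]
      apply div_self
      intro hcon
      have : ‖(c:ℂ) * Complex.exp ((θ:ℂ) * Complex.I)‖ = 0 := by rw [hcon]; simp
      rw [norm_mul, Complex.norm_exp_ofReal_mul_I, mul_one, Complex.norm_real, Real.norm_eq_abs,
        _root_.abs_of_pos hc] at this
      exact hc.ne' this
    rw [Complex.exp_eq_one_iff] at this
    obtain ⟨n, hn⟩ := this
    exact ⟨n, hn.trans (by push_cast; ring)⟩
  set h : ℝ → ℝ := fun θ => (L θ - L' θ).im with hh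
  have hhc : ContinuousOn h s := by
    apply Complex.continuous_im.comp_continuousOn
    apply hLc.sub
    apply Continuous.continuousOn
    rw [hL']
    exact continuous_const.add (Complex.continuous_ofReal.mul continuous_const)
  have hint' : ∀ θ ∈ s, ∃ n : ℤ, h θ = n * (2 * Real.pi) := by
    intro θ hθ
    obtain ⟨n, hn⟩ := hint θ hθ
    refine ⟨n, ?_⟩
    rw [hh]
    simp only [hn]
    push_cast
    simp [Complex.mul_im]
  have hper : h (2 * Real.pi) = h 0 - 2 * Real.pi := by
    rw [hh]
    simp only [hgap, hL']
    simp [Complex.sub_im, Complex.add_im, Complex.mul_im]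
  obtain ⟨n0, hn0⟩ := hint' 0 h0s
  have hy : h 0 - Real.pi ∈ Set.Icc (h (2*Real.pi)) (h 0) := by
    rw [hper]
    constructor <;> [linarith [Real.pi_pos]; linarith [Real.pi_pos]]
  obtain ⟨θ, hθs, hθ⟩ := intermediate_value_Icc' h2π hhc hy
  obtain ⟨n, hn⟩ := hint' θ hθs
  rw [hn, hn0] at hθ
  have : Real.pi * (2*n - 2*n0 + 1) = 0 := by push_cast; linarith
  have h2 : (2*n - 2*n0 + 1 : ℝ) = 0 := by
    rcases mul_eq_zero.mp this with h | h
    · exact absurd h Real.pi_ne_zero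
    · exact_mod_cast h
  have h3 : (2*n - 2*n0 + 1 : ℤ) = 0 := by exact_mod_cast h2
  omega

theorem stmt13 (Ω : Set ℂ) (hΩo : IsOpen Ω) (hΩb : Bornology.IsBounded Ω)
    (f : ℂ → ℝ) (hfi : IntegrableOn f Ω)
    (hf0 : ∀ z ∈ Ω, 0 ≤ f z) (hfpos : 0 < ∫ z in Ω, f z)
    (g : ℝ → ℝ) (hgc : ContinuousOn g (Set.Icc 0 1)) (hg0 : g 0 = 0) (hg1 : 0 < g 1)
    (T : ℂ → ℂ) (hTc : ContinuousOn T Ω) (hTmap : ∀ z ∈ Ω, T z ∈ ball (0:ℂ) 1)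
    (V : ℂ → ℂ)
    (hV : ∀ w : ℂ, V w = ∫ z in Ω, vfun g (Mob w (T z)) * (f z : ℂ)) :
    ContinuousOn V (closedBall (0:ℂ) 1) ∧
    (∀ w : ℂ, ‖w‖ = 1 →
      V w = (g 1 : ℂ) * ((∫ z in Ω, f z : ℝ) : ℂ) * w ∧ V w ≠ 0) ∧
    ∃ w ∈ ball (0:ℂ) 1, V w = 0 := by
  obtain ⟨C, hC0, hC⟩ := vfun_bound g hgc
  have hTabs : ∀ z ∈ Ω, ‖T z‖ < 1 := by
    intro z hz
    simpa [] using mem_ball_zero_iff.mp (hTmap z hz)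
  have hwabs : ∀ w : ℂ, w ∈ closedBall (0:ℂ) 1 → ‖w‖ ≤ 1 := by
    intro w hw
    simpa [] using mem_closedBall_zero_iff.mp hw
  -- Part 1: continuity
  have hVeq : V = fun w => ∫ z in Ω, vfun g (Mob w (T z)) * (f z : ℂ) := funext hV
  have hcont : ContinuousOn V (closedBall (0:ℂ) 1) := by
    rw [hVeq]
    intro w₀ hw₀
    apply MeasureTheory.continuousWithinAt_of_dominated
      (bound := fun z => C * ‖f z‖)
    · filter_upwards [self_mem_nhdsWithin] with w hw
      have hφ : ContinuousOn (fun z => vfun g (Mob w (T z))) Ω := by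
        apply ContinuousOn.comp (vfun_continuousOn g hgc hg0)
        · have hMobz : ContinuousOn (fun z => Mob w z) (ball (0:ℂ) 1) := by
            apply ContinuousOn.div
            · fun_prop
            · exact ((continuous_id.mul continuous_const).add continuous_const).continuousOn
            · intro z hz
              exact Mob_denom_ne w z
                (by simpa [] using mem_ball_zero_iff.mp hz) (hwabs w hw)
          exact hMobz.comp hTc hTmap
        · intro z hz
          exact Mob_mem_closedBall w (T z) (hTabs z hz) (hwabs w hw)
      exact (hφ.aestronglyMeasurable hΩo.measurableSet).mul
        (Complex.continuous_ofReal.comp_aestronglyMeasurable hfi.aestronglyMeasurable)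
    · filter_upwards [self_mem_nhdsWithin] with w hw
      rw [MeasureTheory.ae_restrict_iff' hΩo.measurableSet]
      apply MeasureTheory.ae_of_all
      intro z hz
      rw [norm_mul]
      apply mul_le_mul _ _ (norm_nonneg _) hC0
      · exact hC _ (Mob_mem_closedBall w (T z) (hTabs z hz) (hwabs w hw))
      · simp [Complex.norm_real, Real.norm_eq_abs]
    · exact hfi.norm.const_mul C
    · rw [MeasureTheory.ae_restrict_iff' hΩo.measurableSet]
      apply MeasureTheory.ae_of_all
      intro z hz
      apply ContinuousWithinAt.mul _ continuousWithinAt_const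
      have hMc : ContinuousOn (fun w => Mob w (T z)) (closedBall (0:ℂ) 1) :=
        Mob_continuousOn (T z) (hTabs z hz)
      exact (ContinuousOn.comp (vfun_continuousOn g hgc hg0) hMc
        (fun w hw => Mob_mem_closedBall w (T z) (hTabs z hz) (hwabs w hw))) w₀ hw₀
  -- Part 2: boundary values
  have hbd : ∀ w : ℂ, ‖w‖ = 1 →
      V w = (g 1 : ℂ) * ((∫ z in Ω, f z : ℝ) : ℂ) * w := by
    intro w hw
    have hw0 : w ≠ 0 := by
      intro h; rw [h] at hw; simp at hw
    rw [hV w]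
    have hcongr : ∀ z ∈ Ω, vfun g (Mob w (T z)) * (f z : ℂ)
        = ((g 1 : ℂ) * w) * (f z : ℂ) := by
      intro z hz
      rw [Mob_boundary w (T z) (hTabs z hz) hw]
      congr 1
      rw [vfun, if_neg hw0, hw]
      push_cast
      ring
    rw [MeasureTheory.setIntegral_congr_fun hΩo.measurableSet hcongr]
    rw [MeasureTheory.integral_const_mul]
    have : ∫ (a : ℂ) in Ω, ((f a : ℂ)) ∂volume = ((∫ z in Ω, f z : ℝ) : ℂ) := integral_ofReal
    rw [this]
    ring
  have hbdne : ∀ w : ℂ, ‖w‖ = 1 → V w ≠ 0 := by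
    intro w hw h
    rw [hbd w hw] at h
    have hw0 : w ≠ 0 := by
      intro h'; rw [h'] at hw; simp at hw
    simp only [mul_eq_zero, Complex.ofReal_eq_zero] at h
    rcases h with (h | h) | h
    · exact hg1.ne' h
    · exact hfpos.ne' h
    · exact hw0 h
  refine ⟨hcont, fun w hw => ⟨hbd w hw, hbdne w hw⟩, ?_⟩
  -- Part 3: existence of a zero
  by_contra hcon
  push_neg at hcon
  have hne : ∀ w ∈ closedBall (0:ℂ) 1, V w ≠ 0 := by
    intro w hw
    rcases lt_or_eq_of_le (hwabs w hw) with h | h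
    · apply hcon w
      rw [mem_ball_zero_iff]
      simpa [] using h
    · exact hbdne w h
  apply no_nonvanishing V hcont hne (g 1 * ∫ z in Ω, f z) (by positivity)
  intro w hw
  rw [hbd w hw]
  push_cast
  ring
end
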